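/- For any finite poset P and r ≥ 1, every lattice point of the dilated chain polytope C(P,r) is a sum of r lattice points of C(P,1); that is, chain polytopes satisfy the integer decomposition property. -/

import Mathlib

/-- The dilated order polytope `O(P,r)`. -/
def orderPolytope (P : Type*) [PartialOrder P] (r : ℝ) : Set (P → ℝ) :=
  {x | (∀ p, 0 ≤ x p ∧ x p ≤ r) ∧ ∀ p q : P, p ≤ q → x p ≤ x q}

/-- The dilated chain polytope `C(P,r)`. -/
def chainPolytope (P : Type*) [PartialOrder P] (r : ℝ) : Set (P → ℝ) :=
  {x | (∀ p, 0 ≤ x p) ∧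
    ∀ C : Finset P, IsChain (· ≤ ·) (C : Set P) → ∑ p ∈ C, x p ≤ r}

/-- `x` is a lattice (integral) point. -/
def isLatticePoint {P : Type*} (x : P → ℝ) : Prop := ∀ p, ∃ m : ℤ, x p = m

/-- Characteristic function of a finite subset. -/
def chi {P : Type*} [DecidableEq P] (A : Finset P) : P → ℝ :=
  fun p => if p ∈ A then 1 else 0



open Classical in
/-- Max chain-sum over chains ending at `p`. -/
noncomputable def gfun {P : Type*} [PartialOrder P] [Fintype P] (n : P → ℕ) (p : P) : ℕ :=
  (Finset.univ.powerset.filter (fun C : Finset P =>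
    IsChain (· ≤ ·) (C : Set P) ∧ p ∈ C ∧ ∀ q ∈ C, q ≤ p)).sup (fun C => ∑ q ∈ C, n q)

section aux
variable {P : Type*} [PartialOrder P] [Fintype P] (n : P → ℕ)

open Classical

lemma gfun_le {r : ℕ} (hn : ∀ C : Finset P, IsChain (· ≤ ·) (C : Set P) → ∑ q ∈ C, n q ≤ r)
    (p : P) : gfun n p ≤ r := by
  apply Finset.sup_le
  intro C hC
  simp only [Finset.mem_filter] at hC
  exact hn C hC.2.1

lemma singleton_mem (p : P) : ({p} : Finset P) ∈ (Finset.univ.powerset.filter (fun C : Finset P =>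
    IsChain (· ≤ ·) (C : Set P) ∧ p ∈ C ∧ ∀ q ∈ C, q ≤ p)) := by
  simp only [Finset.mem_filter, Finset.mem_powerset, Finset.subset_univ, true_and,
    Finset.coe_singleton, Finset.mem_singleton]
  exact ⟨Set.subsingleton_singleton.isChain, fun q hq => le_of_eq hq⟩

lemma le_gfun (p : P) : n p ≤ gfun n p := by
  have := Finset.le_sup (f := fun C => ∑ q ∈ C, n q) (singleton_mem p)
  exact (Finset.sum_singleton (fun q => n q) p).ge.trans this

lemma gfun_lt {p q : P} (h : p < q) : gfun n p + n q ≤ gfun n q := by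
  obtain ⟨C, hC, hCeq⟩ := Finset.exists_mem_eq_sup _ ⟨{p}, singleton_mem p⟩
    (fun C => ∑ s ∈ C, n s)
  simp only [Finset.mem_filter, Finset.mem_powerset] at hC
  obtain ⟨-, hchain, hpC, hle⟩ := hC
  have hqC : q ∉ C := fun hq => absurd (hle q hq) h.not_ge
  have hins : (insert q C : Finset P) ∈ (Finset.univ.powerset.filter (fun C : Finset P =>
      IsChain (· ≤ ·) (C : Set P) ∧ q ∈ C ∧ ∀ s ∈ C, s ≤ q)) := by
    simp only [Finset.mem_filter, Finset.mem_powerset, Finset.subset_univ, true_and,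
      Finset.coe_insert, Finset.mem_insert]
    refine ⟨?_, Or.inl trivial, ?_⟩
    · apply hchain.insert
      intro s hs _
      exact Or.inr (le_of_lt (lt_of_le_of_lt (hle s hs) h))
    · rintro s (rfl | hs)
      · exact le_refl s
      · exact le_of_lt (lt_of_le_of_lt (hle s hs) h)
  have := Finset.le_sup (f := fun C => ∑ s ∈ C, n s) hins
  simp only [Finset.sum_insert hqC] at this
  have h3 : gfun n p = ∑ s ∈ C, n s := hCeq
  have h4 : n q + ∑ s ∈ C, n s ≤ gfun n q := this
  omega

theorem nat_decomp (r : ℕ) (hn : ∀ C : Finset P, IsChain (· ≤ ·) (C : Set P) → ∑ q ∈ C, n q ≤ r) :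
    ∃ f : Fin r → P → ℕ,
      (∀ i (C : Finset P), IsChain (· ≤ ·) (C : Set P) → ∑ q ∈ C, f i q ≤ 1) ∧
      ∀ p, n p = ∑ i, f i p := by
  refine ⟨fun i p => if gfun n p - n p ≤ (i : ℕ) ∧ (i : ℕ) < gfun n p then 1 else 0, ?_, ?_⟩
  · intro i C hC
    have : ∑ q ∈ C, (if gfun n q - n q ≤ (i : ℕ) ∧ (i : ℕ) < gfun n q then 1 else 0)
        = (C.filter (fun q => gfun n q - n q ≤ (i : ℕ) ∧ (i : ℕ) < gfun n q)).card := by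
      rw [Finset.card_filter]
    rw [this]
    apply Finset.card_le_one.2
    intro a ha b hb
    simp only [Finset.mem_filter] at ha hb
    by_contra hne
    have hcomp := hC ha.1 hb.1 hne
    have key : ∀ u v : P, u < v →
        (gfun n u - n u ≤ (i : ℕ) ∧ (i : ℕ) < gfun n u) →
        (gfun n v - n v ≤ (i : ℕ) ∧ (i : ℕ) < gfun n v) → False := by
      intro u v huv hu hv
      have h1 := gfun_lt n huv
      have h2 := le_gfun n v
      omega
    rcases hcomp with h | h
    · exact key a b (lt_of_le_of_ne h (by exact hne)) ha.2 hb.2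
    · exact key b a (lt_of_le_of_ne h (fun e => hne e.symm)) hb.2 ha.2
  · intro p
    have h1 : gfun n p ≤ r := gfun_le n hn p
    have h2 : n p ≤ gfun n p := le_gfun n p
    rw [Fin.sum_univ_eq_sum_range (fun i => if gfun n p - n p ≤ i ∧ i < gfun n p then 1 else 0)]
    rw [← Finset.card_filter]
    have : (Finset.range r).filter (fun i => gfun n p - n p ≤ i ∧ i < gfun n p)
        = Finset.Ico (gfun n p - n p) (gfun n p) := by
      ext j
      simp only [Finset.mem_filter, Finset.mem_range, Finset.mem_Ico]
      omega
    rw [this, Nat.card_Ico]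
    omega

end aux

theorem chain_polytope_IDP (P : Type*) [PartialOrder P] [Fintype P]
    (r : ℕ) (hr : 1 ≤ r) (x : P → ℝ)
    (hx : x ∈ chainPolytope P (r : ℝ)) (hxl : isLatticePoint x) :
    ∃ f : Fin r → (P → ℝ),
      (∀ i, f i ∈ chainPolytope P 1 ∧ isLatticePoint (f i)) ∧ x = ∑ i, f i := by
  obtain ⟨hpos, hchains⟩ := hx
  set n : P → ℕ := fun p => ((hxl p).choose).toNat with hn
  have hxn : ∀ p, x p = (n p : ℝ) := by
    intro p
    have h := (hxl p).choose_spec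
    have : (0:ℝ) ≤ ((hxl p).choose : ℝ) := h ▸ hpos p
    have hz : (0:ℤ) ≤ (hxl p).choose := by exact_mod_cast this
    rw [h, hn]; exact_mod_cast (Int.toNat_of_nonneg hz).symm
  have hnchain : ∀ C : Finset P, IsChain (· ≤ ·) (C : Set P) → ∑ q ∈ C, n q ≤ r := by
    intro C hC
    have := hchains C hC
    have : ((∑ q ∈ C, n q : ℕ) : ℝ) ≤ (r : ℝ) := by
      rw [Nat.cast_sum]
      calc ∑ q ∈ C, (n q : ℝ) = ∑ q ∈ C, x q := by
            exact Finset.sum_congr rfl (fun q _ => (hxn q).symm)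
        _ ≤ r := this
    exact_mod_cast this
  obtain ⟨F, hF1, hF2⟩ := nat_decomp n r hnchain
  refine ⟨fun i p => (F i p : ℝ), ?_, ?_⟩
  · intro i
    refine ⟨⟨fun p => by positivity, ?_⟩, fun p => ⟨F i p, by simp⟩⟩
    intro C hC
    have := hF1 i C hC
    have h : ((∑ q ∈ C, F i q : ℕ) : ℝ) ≤ (1 : ℝ) := by exact_mod_cast this
    simpa [Nat.cast_sum] using h
  · funext p
    rw [hxn p, hF2 p]
    simp [Finset.sum_apply, Nat.cast_sum]
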